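/- If the random-walk Metropolis kernel on ℝ^d (with symmetric proposal increment distribution Γ) is geometrically ergodic for target distribution Π, then there exists δ > 0 such that ∫ exp(δ‖x‖) Π(dx) < ∞. -/

import Mathlib

open MeasureTheory ProbabilityTheory
open scoped ENNReal

/-- The `k`-step kernel `P^k`. -/
noncomputable def iterKernel {E : Type*} [MeasurableSpace E] (P : Kernel E E) : ℕ → Kernel E E
  | 0 => Kernel.id
  | n + 1 => P ∘ₖ iterKernel P n

/-- `C` is a small set for `P`. -/
def IsSmallSet {E : Type*} [MeasurableSpace E] (P : Kernel E E) (C : Set E) : Prop :=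
  ∃ (k : ℕ) (δ : ℝ) (ν : Measure E), 1 ≤ k ∧ δ ∈ Set.Ioo (0:ℝ) 1 ∧ IsProbabilityMeasure ν ∧
    ∀ x ∈ C, ∀ A : Set E, MeasurableSet A → ENNReal.ofReal δ * ν A ≤ iterKernel P k x A

/-- Geometric ergodicity (geometric drift condition towards a small set of positive
`Π`-measure). -/
def GeomErgodic {E : Type*} [MeasurableSpace E] (P : Kernel E E) (Pr : Measure E) : Prop :=
  ∃ (C : Set E) (V : E → ℝ≥0∞) (γ b : ℝ),
    MeasurableSet C ∧ IsSmallSet P C ∧ 0 < Pr C ∧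
    γ ∈ Set.Ioo (0:ℝ) 1 ∧ 0 ≤ b ∧ Measurable V ∧ (∀ x, 1 ≤ V x) ∧ Pr {x | V x = ∞} = 0 ∧
    ∀ x, ∫⁻ y, V y ∂(P x) ≤ ENNReal.ofReal γ * V x + ENNReal.ofReal b * C.indicator 1 x

open Filter
section RWMAux

section DriftAux
variable {E : Type*} [MeasurableSpace E] (P : Kernel E E) [IsMarkovKernel P]

instance iterKernel.isMarkov (n : ℕ) : IsMarkovKernel (iterKernel P n) := by
  induction n with
  | zero => exact (inferInstance : IsMarkovKernel (Kernel.id))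
  | succ n ih => exact (inferInstance : IsMarkovKernel (P ∘ₖ iterKernel P n))

lemma iterKernel_lintegral_succ (n : ℕ) (x : E) {g : E → ℝ≥0∞} (hg : Measurable g) :
    ∫⁻ y, g y ∂(iterKernel P (n+1) x) = ∫⁻ z, ∫⁻ y, g y ∂(P z) ∂(iterKernel P n x) :=
  Kernel.lintegral_comp P (iterKernel P n) x hg

lemma iterKernel_lintegral_zero (x : E) {g : E → ℝ≥0∞} (hg : Measurable g) :
    ∫⁻ y, g y ∂(iterKernel P 0 x) = g x := by
  show ∫⁻ y, g y ∂(Kernel.id x) = g x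
  rw [Kernel.id_apply, lintegral_dirac' x hg]

lemma drift_iter {V : E → ℝ≥0∞} (hV : Measurable V) {C : Set E} (hC : MeasurableSet C)
    {γ b : ℝ} (hγ0 : 0 < γ) (hγ1 : γ < 1) (hb : 0 ≤ b)
    (hdrift : ∀ x, ∫⁻ y, V y ∂(P x) ≤ ENNReal.ofReal γ * V x
      + ENNReal.ofReal b * C.indicator 1 x) :
    ∀ (n : ℕ) (x : E), ∫⁻ y, V y ∂(iterKernel P n x)
      ≤ ENNReal.ofReal γ ^ n * V x + ENNReal.ofReal (b / (1 - γ)) := by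
  intro n
  induction n with
  | zero =>
    intro x
    rw [iterKernel_lintegral_zero P x hV, pow_zero, one_mul]
    exact le_self_add
  | succ n ih =>
    intro x
    rw [iterKernel_lintegral_succ P n x hV]
    have hind : ∫⁻ z, C.indicator 1 z ∂(iterKernel P n x) ≤ 1 := by
      calc ∫⁻ z, C.indicator 1 z ∂(iterKernel P n x) ≤ ∫⁻ _, 1 ∂(iterKernel P n x) :=
        lintegral_mono fun z => by by_cases h : z ∈ C <;> simp [h]
      _ = 1 := by simp
    calc ∫⁻ z, ∫⁻ y, V y ∂(P z) ∂(iterKernel P n x)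
        ≤ ∫⁻ z, (ENNReal.ofReal γ * V z + ENNReal.ofReal b * C.indicator 1 z)
          ∂(iterKernel P n x) := lintegral_mono fun z => hdrift z
      _ = ENNReal.ofReal γ * ∫⁻ z, V z ∂(iterKernel P n x)
          + ENNReal.ofReal b * ∫⁻ z, C.indicator 1 z ∂(iterKernel P n x) := by
          rw [lintegral_add_left (hV.const_mul _), lintegral_const_mul _ hV,
            lintegral_const_mul _ (measurable_one.indicator hC)]
      _ ≤ ENNReal.ofReal γ * (ENNReal.ofReal γ ^ n * V x + ENNReal.ofReal (b / (1 - γ)))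
          + ENNReal.ofReal b * 1 :=
          add_le_add (mul_le_mul_right (ih x) _) (mul_le_mul_right hind _)
      _ = ENNReal.ofReal γ ^ (n+1) * V x
          + (ENNReal.ofReal γ * ENNReal.ofReal (b / (1 - γ)) + ENNReal.ofReal b) := by
          rw [mul_add, mul_one, pow_succ, add_assoc]
          ring_nf
      _ ≤ ENNReal.ofReal γ ^ (n+1) * V x + ENNReal.ofReal (b / (1 - γ)) := by
          apply add_le_add_right
          rw [← ENNReal.ofReal_mul hγ0.le, ← ENNReal.ofReal_add
            (mul_nonneg hγ0.le (div_nonneg hb (by linarith))) hb]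
          apply ENNReal.ofReal_le_ofReal
          have h1γ : (0:ℝ) < 1 - γ := by linarith
          have : γ * (b / (1 - γ)) + b = b / (1 - γ) := by field_simp; ring
          exact this.le
end DriftAux

lemma iSup_min_nat' (a : ℝ≥0∞) : ⨆ n : ℕ, min a (n : ℝ≥0∞) = a := by
  apply le_antisymm (iSup_le fun n => min_le_left _ _)
  rcases eq_or_ne a ⊤ with h | h
  · subst h
    calc (⊤ : ℝ≥0∞) = ⨆ n : ℕ, (n : ℝ≥0∞) := ENNReal.iSup_natCast.symm
    _ ≤ ⨆ n : ℕ, min ⊤ (n : ℝ≥0∞) := by simp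
  · obtain ⟨n, hn⟩ := ENNReal.exists_nat_gt h
    exact le_iSup_of_le n (by rw [min_eq_left hn.le])

lemma invariant_drift_integral {E : Type*} [MeasurableSpace E] (P : Kernel E E) [IsMarkovKernel P]
    (μ : Measure E) [IsProbabilityMeasure μ]
    (hinv : ∀ g : E → ℝ≥0∞, Measurable g → ∫⁻ x, ∫⁻ y, g y ∂(P x) ∂μ = ∫⁻ y, g y ∂μ)
    {V : E → ℝ≥0∞} (hV : Measurable V) {C : Set E} (hC : MeasurableSet C)
    {γ b : ℝ} (hγ0 : 0 < γ) (hγ1 : γ < 1) (hb : 0 ≤ b)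
    (hdrift : ∀ x, ∫⁻ y, V y ∂(P x) ≤ ENNReal.ofReal γ * V x
      + ENNReal.ofReal b * C.indicator 1 x)
    (hfin : μ {x | V x = ∞} = 0) :
    ∫⁻ x, V x ∂μ ≤ ENNReal.ofReal (b / (1 - γ)) := by
  set c := ENNReal.ofReal (b / (1 - γ)) with hc
  -- invariance for iterates
  have hinv_n : ∀ (n : ℕ) (g : E → ℝ≥0∞), Measurable g →
      ∫⁻ x, ∫⁻ y, g y ∂(iterKernel P n x) ∂μ = ∫⁻ y, g y ∂μ := by
    intro n
    induction n with
    | zero => intro g hg; exact lintegral_congr fun x => iterKernel_lintegral_zero P x hg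
    | succ n ih =>
      intro g hg
      have hg' : Measurable fun z => ∫⁻ y, g y ∂(P z) :=
        Measurable.lintegral_kernel_prod_right (hg.comp measurable_snd)
      calc ∫⁻ x, ∫⁻ y, g y ∂(iterKernel P (n+1) x) ∂μ
          = ∫⁻ x, ∫⁻ z, (∫⁻ y, g y ∂(P z)) ∂(iterKernel P n x) ∂μ :=
            lintegral_congr fun x => iterKernel_lintegral_succ P n x hg
        _ = ∫⁻ z, ∫⁻ y, g y ∂(P z) ∂μ := ih _ hg'
        _ = ∫⁻ y, g y ∂μ := hinv g hg
  have hiter := drift_iter P hV hC hγ0 hγ1 hb hdrift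
  have hae : ∀ᵐ x ∂μ, V x ≠ ∞ := by
    rw [ae_iff]
    simpa using hfin
  have hγlt : ENNReal.ofReal γ < 1 := ENNReal.ofReal_lt_one.mpr hγ1
  have hN : ∀ N : ℕ, ∫⁻ x, min (V x) N ∂μ ≤ c := by
    intro N
    have key : ∀ n : ℕ, ∫⁻ x, min (V x) N ∂μ
        ≤ ∫⁻ x, min (ENNReal.ofReal γ ^ n * V x + c) (N : ℝ≥0∞) ∂μ := by
      intro n
      rw [← hinv_n n (fun y => min (V y) N) (hV.min measurable_const)]
      apply lintegral_mono fun x => ?_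
      calc ∫⁻ y, min (V y) N ∂(iterKernel P n x)
          ≤ min (∫⁻ y, V y ∂(iterKernel P n x)) (∫⁻ _, (N:ℝ≥0∞) ∂(iterKernel P n x)) :=
            le_min (lintegral_mono fun y => min_le_left _ _)
              (lintegral_mono fun y => min_le_right _ _)
        _ ≤ min (ENNReal.ofReal γ ^ n * V x + c) (N : ℝ≥0∞) := by
            apply min_le_min (hiter n x)
            simp
    have htendsto : Tendsto (fun n => ∫⁻ x, min (ENNReal.ofReal γ ^ n * V x + c) (N:ℝ≥0∞) ∂μ)
        atTop (nhds (∫⁻ _, min c (N:ℝ≥0∞) ∂μ)) := by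
      apply tendsto_lintegral_of_dominated_convergence (fun _ => (N:ℝ≥0∞))
      · exact fun n => ((measurable_const.mul hV).add_const c).min measurable_const
      · exact fun n => Filter.Eventually.of_forall fun x => min_le_right _ _
      · simp
      · filter_upwards [hae] with x hx
        have h1 : Tendsto (fun n => ENNReal.ofReal γ ^ n * V x + c) atTop (nhds c) := by
          have h0 : Tendsto (fun n => ENNReal.ofReal γ ^ n * V x) atTop (nhds 0) := by
            have := ENNReal.Tendsto.mul_const
              (ENNReal.tendsto_pow_atTop_nhds_zero_of_lt_one hγlt) (Or.inr hx)
            simpa using this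
          have := h0.add (tendsto_const_nhds (x := c))
          simpa using this
        exact h1.min tendsto_const_nhds
    have hle : ∫⁻ x, min (V x) N ∂μ ≤ ∫⁻ _, min c (N:ℝ≥0∞) ∂μ := ge_of_tendsto' htendsto key
    calc ∫⁻ x, min (V x) N ∂μ ≤ ∫⁻ _, min c (N:ℝ≥0∞) ∂μ := hle
      _ = min c (N:ℝ≥0∞) := by simp
      _ ≤ c := min_le_left _ _
  calc ∫⁻ x, V x ∂μ = ∫⁻ x, ⨆ N : ℕ, min (V x) N ∂μ :=
        lintegral_congr fun x => (iSup_min_nat' (V x)).symm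
    _ = ⨆ N : ℕ, ∫⁻ x, min (V x) N ∂μ :=
        lintegral_iSup (fun N => hV.min measurable_const)
          (fun N M h x => min_le_min le_rfl (by exact_mod_cast Nat.cast_le.mpr h))
    _ ≤ c := iSup_le hN


lemma iterKernel_zero {E : Type*} [MeasurableSpace E] (P : Kernel E E) :
    iterKernel P 0 = Kernel.id := rfl

lemma iterKernel_succ {E : Type*} [MeasurableSpace E] (P : Kernel E E) (n : ℕ) :
    iterKernel P (n + 1) = P ∘ₖ iterKernel P n := rfl

lemma rwm_local {d : ℕ} (π : EuclideanSpace ℝ (Fin d) → ℝ)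
    (Γ : Measure (EuclideanSpace ℝ (Fin d))) [IsProbabilityMeasure Γ]
    (P : Kernel (EuclideanSpace ℝ (Fin d)) (EuclideanSpace ℝ (Fin d))) [IsMarkovKernel P]
    (hP : ∀ x, ∀ A : Set (EuclideanSpace ℝ (Fin d)), MeasurableSet A →
      P x A = (∫⁻ z, A.indicator
                (fun _ => ENNReal.ofReal (min 1 (π (x + z) / π x))) (x + z) ∂Γ)
        + A.indicator
            (fun _ => 1 - ∫⁻ z, ENNReal.ofReal (min 1 (π (x + z) / π x)) ∂Γ) x)
    {r : ℝ} (hr : 0 ≤ r) (x : EuclideanSpace ℝ (Fin d)) :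
    P x (Metric.closedBall x r)ᶜ ≤ Γ ((Metric.closedBall (0 : EuclideanSpace ℝ (Fin d)) r)ᶜ) := by
  have hm1 : ∀ z : EuclideanSpace ℝ (Fin d),
      ENNReal.ofReal (min 1 (π (x + z) / π x)) ≤ 1 := fun z =>
    le_trans (ENNReal.ofReal_le_ofReal (min_le_left _ _)) (by simp)
  set B := Metric.closedBall (0 : EuclideanSpace ℝ (Fin d)) r with hB
  have hBmeas : MeasurableSet B := Metric.isClosed_closedBall.measurableSet
  have hAmeas : MeasurableSet (Metric.closedBall x r) := Metric.isClosed_closedBall.measurableSet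
  have hxA : x ∈ Metric.closedBall x r := Metric.mem_closedBall_self hr
  have hmem : ∀ z : EuclideanSpace ℝ (Fin d), x + z ∈ Metric.closedBall x r ↔ z ∈ B := by
    intro z
    simp only [hB, Metric.mem_closedBall, dist_eq_norm, add_sub_cancel_left, sub_zero]
  have hI_le : (∫⁻ z, ENNReal.ofReal (min 1 (π (x + z) / π x)) ∂Γ) ≤ 1 := by
    calc (∫⁻ z, ENNReal.ofReal (min 1 (π (x + z) / π x)) ∂Γ) ≤ ∫⁻ _, 1 ∂Γ := lintegral_mono hm1
    _ = 1 := by simp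
  set a := ∫⁻ z in B, ENNReal.ofReal (min 1 (π (x + z) / π x)) ∂Γ with hadef
  set b := ∫⁻ z in Bᶜ, ENNReal.ofReal (min 1 (π (x + z) / π x)) ∂Γ with hbdef
  have hsplit : a + b = ∫⁻ z, ENNReal.ofReal (min 1 (π (x + z) / π x)) ∂Γ :=
    lintegral_add_compl _ hBmeas
  have hab : a + b ≤ 1 := hsplit.le.trans hI_le
  have hbne : b ≠ ∞ := by
    have : b ≤ 1 := le_trans (le_add_left le_rfl : b ≤ a + b) hab
    exact (this.trans_lt ENNReal.one_lt_top).ne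
  have ha : a ≤ 1 - b := ENNReal.le_sub_of_add_le_right hbne hab
  have hPball : P x (Metric.closedBall x r) = 1 - b := by
    rw [hP x _ hAmeas, Set.indicator_of_mem hxA]
    have h1 : (∫⁻ z, (Metric.closedBall x r).indicator
        (fun _ => ENNReal.ofReal (min 1 (π (x + z) / π x))) (x + z) ∂Γ) = a := by
      rw [hadef, ← lintegral_indicator hBmeas]
      apply lintegral_congr fun z => ?_
      by_cases h : z ∈ B
      · rw [Set.indicator_of_mem ((hmem z).mpr h), Set.indicator_of_mem h]
      · rw [Set.indicator_of_notMem (fun hh => h ((hmem z).mp hh)),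
          Set.indicator_of_notMem h]
    rw [h1, ← hsplit, add_comm a b, tsub_add_eq_tsub_tsub, add_tsub_cancel_of_le ha]
  have hb_le : b ≤ Γ Bᶜ := by
    calc b ≤ ∫⁻ _ in Bᶜ, 1 ∂Γ :=
      setLIntegral_mono measurable_const fun z _ => hm1 z
    _ = Γ Bᶜ := setLIntegral_one _
  have hcompl : P x (Metric.closedBall x r)ᶜ = 1 - P x (Metric.closedBall x r) :=
    prob_compl_eq_one_sub hAmeas
  rw [hcompl, hPball, ENNReal.sub_sub_cancel ENNReal.one_ne_top (hb_le.trans prob_le_one)]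
  exact hb_le

lemma iter_local {E : Type*} [MeasurableSpace E] [PseudoMetricSpace E] [OpensMeasurableSpace E]
    (P : Kernel E E) [IsMarkovKernel P] (ε : ℝ≥0∞) {r : ℝ} (hr : 0 ≤ r)
    (hloc : ∀ x, P x (Metric.closedBall x r)ᶜ ≤ ε) :
    ∀ (n : ℕ) (x : E), iterKernel P n x (Metric.closedBall x (n * r))ᶜ ≤ n * ε := by
  intro n
  induction n with
  | zero =>
    intro x
    rw [iterKernel_zero, Kernel.id_apply, Measure.dirac_apply' _ Metric.isClosed_closedBall.measurableSet.compl]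
    rw [Set.indicator_of_notMem]
    · simp
    · intro hx
      exact hx (Metric.mem_closedBall_self (by simp [hr]))
  | succ n ih =>
    intro x
    have hS : MeasurableSet (Metric.closedBall x ((↑(n+1)) * r))ᶜ :=
      Metric.isClosed_closedBall.measurableSet.compl
    rw [iterKernel_succ, Kernel.comp_apply' _ _ _ hS]
    calc ∫⁻ z, P z (Metric.closedBall x ((↑(n+1)) * r))ᶜ ∂(iterKernel P n x)
        ≤ ∫⁻ z, (ε + (Metric.closedBall x ((n:ℝ) * r))ᶜ.indicator 1 z)
          ∂(iterKernel P n x) := by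
          apply lintegral_mono fun z => ?_
          by_cases hz : z ∈ Metric.closedBall x ((n:ℝ) * r)
          · have hsub : (Metric.closedBall x ((↑(n+1)) * r))ᶜ ⊆ (Metric.closedBall z r)ᶜ := by
              apply Set.compl_subset_compl.mpr
              intro y hy
              simp only [Metric.mem_closedBall] at *
              calc dist y x ≤ dist y z + dist z x := dist_triangle y z x
              _ ≤ r + (n:ℝ) * r := add_le_add hy hz
              _ = (↑(n+1)) * r := by push_cast; ring
            exact le_add_right ((measure_mono hsub).trans (hloc z))
          · rw [Set.indicator_of_mem (by exact hz) (1 : E → ℝ≥0∞)]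
            exact le_add_left prob_le_one
      _ = ε + (iterKernel P n x) (Metric.closedBall x ((n:ℝ) * r))ᶜ := by
          rw [lintegral_add_left measurable_const, lintegral_const,
            lintegral_indicator_one Metric.isClosed_closedBall.measurableSet.compl]
          simp
      _ ≤ ε + n * ε := add_le_add_right (ih x) _
      _ = (↑(n+1)) * ε := by push_cast; ring


lemma indicator_const_eq {α : Type*} (A : Set α) (c : ℝ≥0∞) (y : α) :
    A.indicator (fun _ => c) y = c * A.indicator 1 y := by
  by_cases h : y ∈ A <;> simp [h]

lemma rwm_invariant_set {d : ℕ} (π : EuclideanSpace ℝ (Fin d) → ℝ) (hπpos : ∀ x, 0 < π x)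
    (hπmeas : Measurable π)
    (Γ : Measure (EuclideanSpace ℝ (Fin d))) [IsProbabilityMeasure Γ]
    (hΓsymm : Measure.map (fun z => -z) Γ = Γ)
    (P : Kernel (EuclideanSpace ℝ (Fin d)) (EuclideanSpace ℝ (Fin d))) [IsMarkovKernel P]
    (hP : ∀ x, ∀ A : Set (EuclideanSpace ℝ (Fin d)), MeasurableSet A →
      P x A = (∫⁻ z, A.indicator
                (fun _ => ENNReal.ofReal (min 1 (π (x + z) / π x))) (x + z) ∂Γ)
        + A.indicator
            (fun _ => 1 - ∫⁻ z, ENNReal.ofReal (min 1 (π (x + z) / π x)) ∂Γ) x)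
    (A : Set (EuclideanSpace ℝ (Fin d))) (hA : MeasurableSet A) :
    ∫⁻ x, P x A ∂(volume.withDensity fun x => ENNReal.ofReal (π x))
      = (volume.withDensity fun x => ENNReal.ofReal (π x)) A := by
  set f : EuclideanSpace ℝ (Fin d) → ℝ≥0∞ := fun x => ENNReal.ofReal (π x) with hf
  have hfmeas : Measurable f := ENNReal.measurable_ofReal.comp hπmeas
  set m : EuclideanSpace ℝ (Fin d) → EuclideanSpace ℝ (Fin d) → ℝ≥0∞ := fun x z => ENNReal.ofReal (min 1 (π (x + z) / π x)) with hm
  have hmmeas : Measurable (Function.uncurry m) := by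
    apply ENNReal.measurable_ofReal.comp
    exact measurable_const.min
      ((hπmeas.comp (measurable_fst.add measurable_snd)).div (hπmeas.comp measurable_fst))
  set I : EuclideanSpace ℝ (Fin d) → ℝ≥0∞ := fun x => ∫⁻ z, m x z ∂Γ with hI
  have hImeas : Measurable I := Measurable.lintegral_prod_right hmmeas
  have hm_le_one : ∀ x z, m x z ≤ 1 := fun x z =>
    le_trans (ENNReal.ofReal_le_ofReal (min_le_left _ _)) (by simp)
  have hI_le_one : ∀ x, I x ≤ 1 := fun x => by
    calc I x ≤ ∫⁻ _, 1 ∂Γ := lintegral_mono fun z => hm_le_one x z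
    _ = 1 := by simp
  -- indicator of A composed with addition, jointly measurable
  have hindmeas : Measurable fun p : EuclideanSpace ℝ (Fin d) × EuclideanSpace ℝ (Fin d) => A.indicator (1 : EuclideanSpace ℝ (Fin d) → ℝ≥0∞) (p.1 + p.2) := by
    have := (measurable_one.indicator hA :
      Measurable (A.indicator (1 : EuclideanSpace ℝ (Fin d) → ℝ≥0∞)))
    exact this.comp (measurable_fst.add measurable_snd)
  -- the key real identity
  have hmin : ∀ x z, f x * m x z = ENNReal.ofReal (min (π x) (π (x + z))) := by
    intro x z
    rw [hf, hm, ← ENNReal.ofReal_mul (hπpos x).le]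
    congr 1
    rw [mul_min_of_nonneg _ _ (hπpos x).le, mul_one, mul_div_cancel₀ _ (hπpos x).ne']
  -- measurability of the min kernel
  have hq : Measurable (Function.uncurry fun x z =>
      ENNReal.ofReal (min (π x) (π (x + z))) * A.indicator 1 (x + z)) := by
    apply Measurable.mul _ hindmeas
    exact ENNReal.measurable_ofReal.comp
      ((hπmeas.comp measurable_fst).min (hπmeas.comp (measurable_fst.add measurable_snd)))
  have hq2 : Measurable (Function.uncurry fun z y =>
      ENNReal.ofReal (min (π (y - z)) (π y)) * A.indicator 1 y) := by
    apply Measurable.mul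
    · exact ENNReal.measurable_ofReal.comp
        ((hπmeas.comp (measurable_snd.sub measurable_fst)).min (hπmeas.comp measurable_snd))
    · exact (measurable_one.indicator hA).comp measurable_snd
  -- rewrite the kernel applied to A
  have hPx : ∀ x, P x A
      = (∫⁻ z, m x z * A.indicator 1 (x + z) ∂Γ) + (1 - I x) * A.indicator 1 x := by
    intro x
    rw [hP x A hA]
    congr 1
    · exact lintegral_congr fun z => indicator_const_eq A _ _
    · exact indicator_const_eq A _ _
  calc ∫⁻ x, P x A ∂(volume.withDensity f)
      = ∫⁻ x, f x * ((∫⁻ z, m x z * A.indicator 1 (x + z) ∂Γ) + (1 - I x) * A.indicator 1 x)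
          ∂volume := by
        rw [lintegral_congr hPx,
          lintegral_withDensity_eq_lintegral_mul volume hfmeas]
        · rfl
        · apply Measurable.add
          · exact Measurable.lintegral_prod_right (hmmeas.mul hindmeas)
          · exact ((measurable_const.sub hImeas).mul (measurable_one.indicator hA))
    _ = ∫⁻ x, (∫⁻ z, f x * (m x z * A.indicator 1 (x + z)) ∂Γ)
          + f x * ((1 - I x) * A.indicator 1 x) ∂volume := by
        apply lintegral_congr fun x => ?_
        rw [mul_add, lintegral_const_mul]
        exact (hmmeas.comp (measurable_const.prodMk measurable_id)).mul
          ((measurable_one.indicator hA).comp (measurable_const.add measurable_id))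
    _ = (∫⁻ x, ∫⁻ z, ENNReal.ofReal (min (π x) (π (x + z))) * A.indicator 1 (x + z) ∂Γ ∂volume)
          + ∫⁻ x, f x * ((1 - I x) * A.indicator 1 x) ∂volume := by
        rw [lintegral_add_right]
        · congr 1
          apply lintegral_congr fun x => lintegral_congr fun z => ?_
          rw [← mul_assoc, hmin]
        · exact (hfmeas.mul ((measurable_const.sub hImeas).mul (measurable_one.indicator hA)))
    _ = (∫⁻ x, f x * I x * A.indicator 1 x ∂volume)
          + ∫⁻ x, f x * ((1 - I x) * A.indicator 1 x) ∂volume := by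
        congr 1
        rw [lintegral_lintegral_swap hq.aemeasurable]
        have h1 : ∀ z, (∫⁻ x, ENNReal.ofReal (min (π x) (π (x + z))) * A.indicator 1 (x + z)
            ∂volume) = ∫⁻ y, ENNReal.ofReal (min (π (y - z)) (π y)) * A.indicator 1 y ∂volume := by
          intro z
          rw [← lintegral_add_right_eq_self
            (fun y => ENNReal.ofReal (min (π (y - z)) (π y)) * A.indicator 1 y) z]
          apply lintegral_congr fun x => ?_
          rw [add_sub_cancel_right]
        rw [lintegral_congr h1]
        -- symmetry of Γ
        have h2 : (∫⁻ z, ∫⁻ y, ENNReal.ofReal (min (π (y - z)) (π y)) * A.indicator 1 y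
            ∂volume ∂Γ) = ∫⁻ z, ∫⁻ y, ENNReal.ofReal (min (π (y + z)) (π y)) * A.indicator 1 y
            ∂volume ∂Γ := by
          conv_lhs => rw [← hΓsymm]
          rw [lintegral_map (Measurable.lintegral_prod_right hq2) measurable_neg]
          apply lintegral_congr fun z => lintegral_congr fun y => ?_
          rw [sub_neg_eq_add]
        rw [h2]
        have hq3 : Measurable (Function.uncurry fun z y =>
            ENNReal.ofReal (min (π (y + z)) (π y)) * A.indicator 1 y) := by
          apply Measurable.mul
          · exact ENNReal.measurable_ofReal.comp
              ((hπmeas.comp (measurable_snd.add measurable_fst)).min (hπmeas.comp measurable_snd))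
          · exact (measurable_one.indicator hA).comp measurable_snd
        rw [lintegral_lintegral_swap hq3.aemeasurable]
        apply lintegral_congr fun y => ?_
        have hmeasz : Measurable fun z : EuclideanSpace ℝ (Fin d) =>
            ENNReal.ofReal (min (π (y + z)) (π y)) :=
          ENNReal.measurable_ofReal.comp
            ((hπmeas.comp (measurable_const.add measurable_id)).min measurable_const)
        rw [lintegral_mul_const _ hmeasz]
        congr 1
        have hz : ∀ z, ENNReal.ofReal (min (π (y + z)) (π y)) = f y * m y z := by
          intro z
          rw [hmin, min_comm]
        have hmy : Measurable (m y) :=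
          hmmeas.comp (measurable_const.prodMk measurable_id)
        rw [lintegral_congr hz, lintegral_const_mul _ hmy]
    _ = ∫⁻ x, f x * A.indicator 1 x ∂volume := by
        rw [← lintegral_add_left]
        · apply lintegral_congr fun x => ?_
          by_cases h : x ∈ A
          · simp only [Set.indicator_of_mem h, Pi.one_apply, mul_one]
            rw [← mul_add, add_tsub_cancel_of_le (hI_le_one x), mul_one]
          · simp [Set.indicator_of_notMem h]
        · exact (hfmeas.mul hImeas).mul (measurable_one.indicator hA)
    _ = (volume.withDensity f) A := by
        rw [withDensity_apply _ hA, ← lintegral_indicator hA]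
        apply lintegral_congr fun x => ?_
        by_cases h : x ∈ A <;> simp [h]

end RWMAux

/-- If the random-walk Metropolis kernel on `ℝ^d` (symmetric proposal increment law `Γ`,
target density `π`) is geometrically ergodic, then `∫ exp(δ‖x‖) Π(dx) < ∞` for some
`δ > 0`. -/
theorem rwm_geomErgodic_exp_moment
    {d : ℕ} (π : EuclideanSpace ℝ (Fin d) → ℝ) (hπpos : ∀ x, 0 < π x)
    (hπmeas : Measurable π)
    (Pr : Measure (EuclideanSpace ℝ (Fin d))) [IsProbabilityMeasure Pr]
    (hdens : Pr = volume.withDensity (fun x => ENNReal.ofReal (π x)))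
    (Γ : Measure (EuclideanSpace ℝ (Fin d))) [IsProbabilityMeasure Γ]
    (hΓsymm : Measure.map (fun z => -z) Γ = Γ)
    (P : Kernel (EuclideanSpace ℝ (Fin d)) (EuclideanSpace ℝ (Fin d))) [IsMarkovKernel P]
    -- P is the random-walk Metropolis kernel with proposal increment Γ and target π:
    (hP : ∀ x, ∀ A : Set (EuclideanSpace ℝ (Fin d)), MeasurableSet A →
      P x A = (∫⁻ z, A.indicator
                (fun _ => ENNReal.ofReal (min 1 (π (x + z) / π x))) (x + z) ∂Γ)
        + A.indicator
            (fun _ => 1 - ∫⁻ z, ENNReal.ofReal (min 1 (π (x + z) / π x)) ∂Γ) x)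
    (herg : GeomErgodic P Pr) :
    ∃ δ : ℝ, 0 < δ ∧ ∫⁻ x, ENNReal.ofReal (Real.exp (δ * ‖x‖)) ∂Pr < ∞ := by
  classical
  obtain ⟨C, V, γ, b, hCmeas, hCsmall, hCpos, hγ, hb, hVmeas, hV1, hVfin, hdrift⟩ := herg
  obtain ⟨k, δ₀, ν, hk1, hδ₀, hν, hminor⟩ := hCsmall
  obtain ⟨hγ0, hγ1⟩ := hγ
  obtain ⟨hδ₀0, hδ₀1⟩ := hδ₀
  haveI := hν
  -- invariance of Pr under P
  have hsetinv := rwm_invariant_set π hπpos hπmeas Γ hΓsymm P hP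
  have hbind : Pr.bind ⇑P = Pr := by
    apply Measure.ext fun A hA => ?_
    rw [Measure.bind_apply hA P.measurable.aemeasurable, hdens]
    exact hsetinv A hA
  have hinv : ∀ g : (EuclideanSpace ℝ (Fin d)) → ℝ≥0∞, Measurable g →
      ∫⁻ x, ∫⁻ y, g y ∂(P x) ∂Pr = ∫⁻ y, g y ∂Pr := by
    intro g hg
    conv_rhs => rw [← hbind]
    rw [Measure.lintegral_bind P.measurable.aemeasurable hg.aemeasurable]
  -- integrability of V
  set c := ENNReal.ofReal (b / (1 - γ)) with hcdef
  have hπV : ∫⁻ x, V x ∂Pr ≤ c :=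
    invariant_drift_integral P Pr hinv hVmeas hCmeas hγ0 hγ1 hb hdrift hVfin
  -- choice of ε and r
  have hk0 : (0:ℝ) < (k:ℝ) := by exact_mod_cast Nat.lt_of_lt_of_le Nat.zero_lt_one hk1
  set εR : ℝ := min ((1 - γ)/2) (δ₀/(4*k)) with hεRdef
  have hεR0 : 0 < εR := lt_min (by linarith) (div_pos hδ₀0 (by linarith))
  have hεR1 : εR < 1 - γ := (min_le_left _ _).trans_lt (by linarith)
  have hεRlt1 : εR < 1 := by linarith
  -- find r with small tail for Γ
  have hiInter : ⋂ n : ℕ, (Metric.closedBall (0 : EuclideanSpace ℝ (Fin d)) (n:ℝ))ᶜ = ∅ := by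
    ext x
    simp only [Set.mem_iInter, Set.mem_compl_iff, Metric.mem_closedBall, Set.mem_empty_iff_false,
      iff_false, not_forall, not_not]
    obtain ⟨n, hn⟩ := exists_nat_gt (dist x 0)
    exact ⟨n, hn.le⟩
  have htail : Tendsto (fun n : ℕ => Γ ((Metric.closedBall (0 : EuclideanSpace ℝ (Fin d)) (n:ℝ))ᶜ))
      atTop (nhds 0) := by
    have h := tendsto_measure_iInter_atTop (μ := Γ)
      (s := fun n : ℕ => (Metric.closedBall (0 : EuclideanSpace ℝ (Fin d)) (n:ℝ))ᶜ)
      (fun n => Metric.isClosed_closedBall.measurableSet.compl.nullMeasurableSet)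
      (fun i j hij => Set.compl_subset_compl.mpr
        (Metric.closedBall_subset_closedBall (by exact_mod_cast hij)))
      ⟨0, measure_ne_top Γ _⟩
    rwa [hiInter, measure_empty] at h
  obtain ⟨n₀, hn₀⟩ := (htail.eventually_lt_const
    (by simpa using hεR0 : (0:ℝ≥0∞) < ENNReal.ofReal εR)).exists
  set r : ℝ := max (n₀ : ℝ) 1 with hrdef
  have hr1 : (1:ℝ) ≤ r := le_max_right _ _
  have hr0 : (0:ℝ) < r := lt_of_lt_of_le one_pos hr1
  set B := Metric.closedBall (0 : EuclideanSpace ℝ (Fin d)) r with hBdef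
  have hΓB : Γ Bᶜ ≤ ENNReal.ofReal εR := by
    refine le_trans (measure_mono (Set.compl_subset_compl.mpr
      (Metric.closedBall_subset_closedBall (le_max_left _ _)))) hn₀.le
  -- locality
  have hloc : ∀ x, P x (Metric.closedBall x r)ᶜ ≤ ENNReal.ofReal εR :=
    fun x => (rwm_local π Γ P hP hr0.le x).trans hΓB
  have hkloc : ∀ (n : ℕ) (x), iterKernel P n x (Metric.closedBall x ((n:ℝ) * r))ᶜ
      ≤ (n:ℝ≥0∞) * ENNReal.ofReal εR := iter_local P (ENNReal.ofReal εR) hr0.le hloc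
  -- C is bounded
  obtain ⟨x₀, hx₀⟩ := nonempty_of_measure_ne_zero hCpos.ne'
  have hνball : ∀ x ∈ C, ENNReal.ofReal (3/4) ≤ ν (Metric.closedBall x ((k:ℝ) * r)) := by
    intro x hx
    have h1 : ENNReal.ofReal δ₀ * ν (Metric.closedBall x ((k:ℝ) * r))ᶜ
        ≤ iterKernel P k x (Metric.closedBall x ((k:ℝ) * r))ᶜ :=
      hminor x hx _ Metric.isClosed_closedBall.measurableSet.compl
    have h2 : ENNReal.ofReal δ₀ * ν (Metric.closedBall x ((k:ℝ) * r))ᶜ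
        ≤ ENNReal.ofReal δ₀ * ENNReal.ofReal (1/4) := by
      calc ENNReal.ofReal δ₀ * ν (Metric.closedBall x ((k:ℝ) * r))ᶜ
          ≤ (k:ℝ≥0∞) * ENNReal.ofReal εR := h1.trans (hkloc k x)
        _ ≤ (k:ℝ≥0∞) * ENNReal.ofReal (δ₀/(4*(k:ℝ))) :=
            mul_le_mul_right (ENNReal.ofReal_le_ofReal (min_le_right _ _)) _
        _ = ENNReal.ofReal ((k:ℝ) * (δ₀/(4*(k:ℝ)))) := by
            rw [ENNReal.ofReal_mul (Nat.cast_nonneg k), ENNReal.ofReal_natCast]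
        _ = ENNReal.ofReal (δ₀ * (1/4)) := by
            congr 1
            field_simp
        _ = ENNReal.ofReal δ₀ * ENNReal.ofReal (1/4) := ENNReal.ofReal_mul hδ₀0.le
    have h3 : ν (Metric.closedBall x ((k:ℝ) * r))ᶜ ≤ ENNReal.ofReal (1/4) :=
      (ENNReal.mul_le_mul_iff_right (ENNReal.ofReal_pos.mpr hδ₀0).ne' ENNReal.ofReal_ne_top).mp h2
    have h4 : ν (Metric.closedBall x ((k:ℝ) * r)) = 1 - ν (Metric.closedBall x ((k:ℝ) * r))ᶜ := by
      have h := prob_compl_eq_one_sub (μ := ν)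
        (s := (Metric.closedBall x ((k:ℝ) * r))ᶜ) Metric.isClosed_closedBall.measurableSet.compl
      rwa [compl_compl] at h
    rw [h4]
    calc ENNReal.ofReal (3/4) = 1 - ENNReal.ofReal (1/4) := by
          rw [← ENNReal.ofReal_one, ← ENNReal.ofReal_sub _ (by norm_num)]
          norm_num
    _ ≤ 1 - ν (Metric.closedBall x ((k:ℝ) * r))ᶜ := tsub_le_tsub_left h3 1
  have hCbdd : ∀ x ∈ C, dist x x₀ ≤ 2 * ((k:ℝ) * r) := by
    intro x hx
    by_contra hcon
    push_neg at hcon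
    have hdisj : Disjoint (Metric.closedBall x ((k:ℝ) * r)) (Metric.closedBall x₀ ((k:ℝ) * r)) :=
      Metric.closedBall_disjoint_closedBall (by linarith)
    have hsum : ENNReal.ofReal (3/4) + ENNReal.ofReal (3/4)
        ≤ ν (Metric.closedBall x ((k:ℝ) * r) ∪ Metric.closedBall x₀ ((k:ℝ) * r)) := by
      rw [measure_union hdisj Metric.isClosed_closedBall.measurableSet]
      exact add_le_add (hνball x hx) (hνball x₀ hx₀)
    have hle1 : ν (Metric.closedBall x ((k:ℝ) * r) ∪ Metric.closedBall x₀ ((k:ℝ) * r)) ≤ 1 :=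
      prob_le_one
    rw [← ENNReal.ofReal_add (by norm_num) (by norm_num)] at hsum
    have : (3/4 + 3/4 : ℝ) ≤ 1 := ENNReal.ofReal_le_one.mp (hsum.trans hle1)
    norm_num at this
  set R : ℝ := ‖x₀‖ + 2 * ((k:ℝ) * r) + 1 with hRdef
  have hR1 : 1 ≤ R := by
    have h0 : (0:ℝ) ≤ 2 * ((k:ℝ) * r) := by positivity
    have := norm_nonneg x₀
    rw [hRdef]
    linarith
  have hCR : ∀ x ∈ C, ‖x‖ < R := by
    intro x hx
    have h1 : ‖x‖ - ‖x₀‖ ≤ ‖x - x₀‖ := norm_sub_norm_le x x₀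
    have h2 : ‖x - x₀‖ = dist x x₀ := (dist_eq_norm x x₀).symm
    have := hCbdd x hx
    rw [hRdef]; linarith
  -- growth of V
  set ρ : ℝ := (1 - εR)/γ with hρdef
  have hρ1 : 1 < ρ := by
    rw [hρdef, lt_div_iff₀ hγ0]
    linarith
  have hρ0 : 0 < ρ := lt_trans one_pos hρ1
  have hVtail : ∀ (n : ℕ) (x : EuclideanSpace ℝ (Fin d)), R + (n:ℝ) * r ≤ ‖x‖ →
      ENNReal.ofReal (ρ^n) ≤ V x := by
    intro n
    induction n with
    | zero =>
      intro x _
      simpa using hV1 x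
    | succ n ih =>
      intro x hx
      have hnr : (0:ℝ) ≤ ((n:ℝ)+1) * r := by positivity
      have hxC : x ∉ C := by
        intro hxC
        have := hCR x hxC
        push_cast at hx
        linarith
      have hdx : ∫⁻ y, V y ∂(P x) ≤ ENNReal.ofReal γ * V x := by
        have := hdrift x
        rwa [Set.indicator_of_notMem hxC, mul_zero, add_zero] at this
      -- lower bound on the integral
      have hyball : ∀ y ∈ Metric.closedBall x r, ENNReal.ofReal (ρ^n) ≤ V y := by
        intro y hy
        apply ih
        have h1 : ‖x‖ - ‖y‖ ≤ ‖x - y‖ := norm_sub_norm_le x y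
        have h2 : ‖x - y‖ = dist x y := (dist_eq_norm x y).symm
        have h3 : dist x y ≤ r := by rw [dist_comm]; exact hy
        push_cast at hx
        linarith
      have hPxball : 1 - ENNReal.ofReal εR ≤ P x (Metric.closedBall x r) := by
        have hc : P x ((Metric.closedBall x r)ᶜᶜ) = 1 - P x (Metric.closedBall x r)ᶜ :=
          prob_compl_eq_one_sub (μ := P x) (s := (Metric.closedBall x r)ᶜ)
            Metric.isClosed_closedBall.measurableSet.compl
        rw [compl_compl] at hc
        rw [hc]
        exact tsub_le_tsub_left (hloc x) 1
      have hlow : ENNReal.ofReal (ρ^n) * (1 - ENNReal.ofReal εR) ≤ ∫⁻ y, V y ∂(P x) := by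
        calc ENNReal.ofReal (ρ^n) * (1 - ENNReal.ofReal εR)
            ≤ ENNReal.ofReal (ρ^n) * P x (Metric.closedBall x r) :=
              mul_le_mul_right hPxball _
          _ = ∫⁻ _ in Metric.closedBall x r, ENNReal.ofReal (ρ^n) ∂(P x) :=
              (setLIntegral_const _ _).symm
          _ ≤ ∫⁻ y in Metric.closedBall x r, V y ∂(P x) :=
              setLIntegral_mono hVmeas hyball
          _ ≤ ∫⁻ y, V y ∂(P x) := setLIntegral_le_lintegral _ _
      have hcomb : ENNReal.ofReal (ρ^n * (1 - εR)) ≤ ENNReal.ofReal γ * V x := by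
        rw [ENNReal.ofReal_mul (pow_pos hρ0 n).le, ENNReal.ofReal_sub _ hεR0.le,
          ENNReal.ofReal_one]
        exact hlow.trans hdx
      have hdiv : ENNReal.ofReal (ρ^n * (1 - εR)) / ENNReal.ofReal γ ≤ V x := by
        rw [ENNReal.div_le_iff_le_mul (Or.inl (ENNReal.ofReal_pos.mpr hγ0).ne') (Or.inl ENNReal.ofReal_ne_top)]
        rwa [mul_comm (ENNReal.ofReal γ) (V x)] at hcomb
      calc ENNReal.ofReal (ρ^(n+1)) = ENNReal.ofReal (ρ^n * (1 - εR)) / ENNReal.ofReal γ := by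
            rw [← ENNReal.ofReal_div_of_pos hγ0]
            congr 1
            rw [pow_succ, hρdef]
            field_simp
        _ ≤ V x := hdiv
  -- tail bound for Pr
  have htailPr : ∀ n : ℕ, Pr {x : EuclideanSpace ℝ (Fin d) | R + (n:ℝ) * r ≤ ‖x‖}
      ≤ c / ENNReal.ofReal (ρ^n) := by
    intro n
    have hsub : {x : EuclideanSpace ℝ (Fin d) | R + (n:ℝ) * r ≤ ‖x‖}
        ⊆ {x | ENNReal.ofReal (ρ^n) ≤ V x} := fun x hx => hVtail n x hx
    have hmarkov := mul_meas_ge_le_lintegral₀ hVmeas.aemeasurable (μ := Pr) (ENNReal.ofReal (ρ^n))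
    rw [ENNReal.le_div_iff_mul_le (Or.inl (ENNReal.ofReal_pos.mpr (pow_pos hρ0 n)).ne')
      (Or.inl ENNReal.ofReal_ne_top)]
    calc Pr {x : EuclideanSpace ℝ (Fin d) | R + (n:ℝ) * r ≤ ‖x‖} * ENNReal.ofReal (ρ^n)
        ≤ Pr {x | ENNReal.ofReal (ρ^n) ≤ V x} * ENNReal.ofReal (ρ^n) :=
          mul_le_mul_left (measure_mono hsub) _
      _ = ENNReal.ofReal (ρ^n) * Pr {x | ENNReal.ofReal (ρ^n) ≤ V x} := mul_comm _ _
      _ ≤ ∫⁻ x, V x ∂Pr := hmarkov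
      _ ≤ c := hπV
  -- conclusion
  set s : ℝ := Real.sqrt ρ with hsdef
  have hs0 : 0 < s := Real.sqrt_pos.mpr hρ0
  have hs1 : 1 < s := by
    rw [hsdef]
    nlinarith [Real.sq_sqrt hρ0.le, Real.sqrt_nonneg ρ, sq_nonneg (Real.sqrt ρ - 1)]
  have hρs : s^2 = ρ := Real.sq_sqrt hρ0.le
  set δ : ℝ := Real.log s / r with hδdef
  have hδ0 : 0 < δ := div_pos (Real.log_pos hs1) hr0
  have hexp : Real.exp (δ * r) = s := by
    rw [hδdef, div_mul_cancel₀ _ hr0.ne', Real.exp_log hs0]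
  refine ⟨δ, hδ0, ?_⟩
  -- the pointwise tail decomposition
  have hpt : ∀ x : EuclideanSpace ℝ (Fin d), ENNReal.ofReal (Real.exp (δ * ‖x‖))
      ≤ ENNReal.ofReal (Real.exp (δ * (R + r)))
        + ∑' n : ℕ, ({y : EuclideanSpace ℝ (Fin d) | R + ((n:ℝ)+1) * r ≤ ‖y‖}).indicator 1 x
            * ENNReal.ofReal (Real.exp (δ * (R + ((n:ℝ)+2) * r))) := by
    intro x
    by_cases hx : ‖x‖ < R + r
    · refine le_trans ?_ le_self_add
      exact ENNReal.ofReal_le_ofReal (Real.exp_le_exp.mpr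
        (mul_le_mul_of_nonneg_left hx.le hδ0.le))
    · push_neg at hx
      set t : ℝ := (‖x‖ - R)/r with htdef
      have ht1 : 1 ≤ t := (le_div_iff₀ hr0).mpr (by linarith)
      have ht0 : 0 ≤ t := by linarith
      have hfl : 1 ≤ ⌊t⌋₊ := Nat.le_floor (by exact_mod_cast ht1)
      set n : ℕ := ⌊t⌋₊ - 1 with hndef
      have hn1 : (n:ℝ) + 1 = (⌊t⌋₊ : ℝ) := by
        rw [hndef]
        push_cast [Nat.cast_sub hfl]
        ring
      have hmemx : R + ((n:ℝ)+1) * r ≤ ‖x‖ := by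
        have h1 : ((n:ℝ)+1) ≤ t := by rw [hn1]; exact Nat.floor_le ht0
        have h2 : ((n:ℝ)+1) * r ≤ t * r := mul_le_mul_of_nonneg_right h1 hr0.le
        rw [htdef, div_mul_cancel₀ _ hr0.ne'] at h2
        linarith
      have hupx : ‖x‖ ≤ R + ((n:ℝ)+2) * r := by
        have h1 : t < (n:ℝ) + 2 := by
          have := Nat.lt_floor_add_one t
          rw [← hn1] at this
          linarith
        have h2 : t * r ≤ ((n:ℝ)+2) * r := mul_le_mul_of_nonneg_right h1.le hr0.le
        rw [htdef, div_mul_cancel₀ _ hr0.ne'] at h2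
        linarith
      calc ENNReal.ofReal (Real.exp (δ * ‖x‖))
          ≤ ENNReal.ofReal (Real.exp (δ * (R + ((n:ℝ)+2) * r))) :=
            ENNReal.ofReal_le_ofReal (Real.exp_le_exp.mpr
              (mul_le_mul_of_nonneg_left hupx hδ0.le))
        _ = ({y : EuclideanSpace ℝ (Fin d) | R + ((n:ℝ)+1) * r ≤ ‖y‖}).indicator 1 x
            * ENNReal.ofReal (Real.exp (δ * (R + ((n:ℝ)+2) * r))) := by
            simp only [Set.indicator_apply, Set.mem_setOf_eq, if_pos hmemx, Pi.one_apply,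
              one_mul]
        _ ≤ ∑' m : ℕ, ({y : EuclideanSpace ℝ (Fin d) | R + ((m:ℝ)+1) * r ≤ ‖y‖}).indicator 1 x
            * ENNReal.ofReal (Real.exp (δ * (R + ((m:ℝ)+2) * r))) := ENNReal.le_tsum n
        _ ≤ _ := le_add_self
  have htailmeas : ∀ a : ℝ, MeasurableSet {y : EuclideanSpace ℝ (Fin d) | a ≤ ‖y‖} :=
    fun a => measurableSet_le measurable_const measurable_norm
  -- integrate
  have hint : ∫⁻ x, ENNReal.ofReal (Real.exp (δ * ‖x‖)) ∂Pr
      ≤ ENNReal.ofReal (Real.exp (δ * (R + r)))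
        + ∑' n : ℕ, Pr {y : EuclideanSpace ℝ (Fin d) | R + ((n:ℝ)+1) * r ≤ ‖y‖}
            * ENNReal.ofReal (Real.exp (δ * (R + ((n:ℝ)+2) * r))) := by
    calc ∫⁻ x, ENNReal.ofReal (Real.exp (δ * ‖x‖)) ∂Pr
        ≤ ∫⁻ x, (ENNReal.ofReal (Real.exp (δ * (R + r)))
          + ∑' n : ℕ, ({y : EuclideanSpace ℝ (Fin d) | R + ((n:ℝ)+1) * r ≤ ‖y‖}).indicator 1 x
            * ENNReal.ofReal (Real.exp (δ * (R + ((n:ℝ)+2) * r)))) ∂Pr := lintegral_mono hpt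
      _ = ENNReal.ofReal (Real.exp (δ * (R + r)))
          + ∫⁻ x, (∑' n : ℕ, ({y : EuclideanSpace ℝ (Fin d) | R + ((n:ℝ)+1) * r ≤ ‖y‖}).indicator
              1 x * ENNReal.ofReal (Real.exp (δ * (R + ((n:ℝ)+2) * r)))) ∂Pr := by
          rw [lintegral_add_left measurable_const, lintegral_const, measure_univ, mul_one]
      _ = ENNReal.ofReal (Real.exp (δ * (R + r)))
          + ∑' n : ℕ, ∫⁻ x, ({y : EuclideanSpace ℝ (Fin d) | R + ((n:ℝ)+1) * r ≤ ‖y‖}).indicator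
              1 x * ENNReal.ofReal (Real.exp (δ * (R + ((n:ℝ)+2) * r))) ∂Pr := by
          rw [lintegral_tsum fun n => ((measurable_one.indicator (htailmeas _)).mul_const
            _).aemeasurable]
      _ = ENNReal.ofReal (Real.exp (δ * (R + r)))
          + ∑' n : ℕ, Pr {y : EuclideanSpace ℝ (Fin d) | R + ((n:ℝ)+1) * r ≤ ‖y‖}
            * ENNReal.ofReal (Real.exp (δ * (R + ((n:ℝ)+2) * r))) := by
          congr 1
          apply tsum_congr fun n => ?_
          rw [lintegral_mul_const _ (measurable_one.indicator (htailmeas _)),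
            lintegral_indicator_one (htailmeas _)]
  -- bound each term
  set K : ℝ := Real.exp (δ * (R + 2*r)) with hKdef
  have hK0 : 0 < K := Real.exp_pos _
  have hterm : ∀ n : ℕ, Pr {y : EuclideanSpace ℝ (Fin d) | R + ((n:ℝ)+1) * r ≤ ‖y‖}
      * ENNReal.ofReal (Real.exp (δ * (R + ((n:ℝ)+2) * r)))
      ≤ c * ENNReal.ofReal K * (ENNReal.ofReal (1/s))^n := by
    intro n
    have h1 : Pr {y : EuclideanSpace ℝ (Fin d) | R + ((n:ℝ)+1) * r ≤ ‖y‖}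
        ≤ c * ENNReal.ofReal ((ρ^(n+1))⁻¹) := by
      have := htailPr (n+1)
      push_cast at this
      rwa [div_eq_mul_inv, ← ENNReal.ofReal_inv_of_pos (pow_pos hρ0 (n+1))] at this
    have h2 : Real.exp (δ * (R + ((n:ℝ)+2) * r)) = K * s^n := by
      have harg : δ * (R + ((n:ℝ)+2) * r) = δ * (R + 2*r) + (n:ℝ) * (δ * r) := by ring
      rw [harg, Real.exp_add, Real.exp_nat_mul, hexp, hKdef]
    have hsn : (0:ℝ) < s^n := pow_pos hs0 n
    have hkey : (ρ^(n+1))⁻¹ * (K * s^n) ≤ K * (1/s)^n := by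
      have hmono : (s^n)^2 ≤ ρ^(n+1) := by
        rw [← hρs, ← pow_mul, ← pow_mul]
        exact pow_le_pow_right₀ hs1.le (by omega)
      have hstep : s^n * (ρ^(n+1))⁻¹ ≤ (1/s)^n := by
        calc s^n * (ρ^(n+1))⁻¹ ≤ s^n * ((s^n)^2)⁻¹ := by
              apply mul_le_mul_of_nonneg_left _ hsn.le
              exact inv_anti₀ (pow_pos (pow_pos hs0 n) 2) hmono
          _ = (s^n)⁻¹ := by
              rw [sq, mul_inv, ← mul_assoc, mul_inv_cancel₀ hsn.ne', one_mul]
          _ = (1/s)^n := by rw [one_div, inv_pow]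
      calc (ρ^(n+1))⁻¹ * (K * s^n) = K * (s^n * (ρ^(n+1))⁻¹) := by ring
        _ ≤ K * (1/s)^n := mul_le_mul_of_nonneg_left hstep hK0.le
    calc Pr {y : EuclideanSpace ℝ (Fin d) | R + ((n:ℝ)+1) * r ≤ ‖y‖}
        * ENNReal.ofReal (Real.exp (δ * (R + ((n:ℝ)+2) * r)))
        ≤ (c * ENNReal.ofReal ((ρ^(n+1))⁻¹)) * ENNReal.ofReal (K * s^n) := by
          rw [h2]
          exact mul_le_mul_left h1 _
      _ = c * ENNReal.ofReal ((ρ^(n+1))⁻¹ * (K * s^n)) := by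
          rw [mul_assoc, ← ENNReal.ofReal_mul (inv_nonneg.mpr (pow_pos hρ0 (n+1)).le)]
      _ ≤ c * ENNReal.ofReal (K * (1/s)^n) :=
          mul_le_mul_right (ENNReal.ofReal_le_ofReal hkey) _
      _ = c * ENNReal.ofReal K * (ENNReal.ofReal (1/s))^n := by
          rw [ENNReal.ofReal_mul hK0.le, ENNReal.ofReal_pow (one_div_pos.mpr hs0).le, mul_assoc]
  -- sum the geometric series
  set a : ℝ≥0∞ := ENNReal.ofReal (1/s) with hadef
  have ha1 : a < 1 := by
    rw [hadef, ENNReal.ofReal_lt_one, div_lt_one hs0]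
    exact hs1
  have hsum : (∑' n : ℕ, Pr {y : EuclideanSpace ℝ (Fin d) | R + ((n:ℝ)+1) * r ≤ ‖y‖}
      * ENNReal.ofReal (Real.exp (δ * (R + ((n:ℝ)+2) * r))))
      ≤ c * ENNReal.ofReal K * (1 - a)⁻¹ := by
    calc (∑' n : ℕ, Pr {y : EuclideanSpace ℝ (Fin d) | R + ((n:ℝ)+1) * r ≤ ‖y‖}
        * ENNReal.ofReal (Real.exp (δ * (R + ((n:ℝ)+2) * r))))
        ≤ ∑' n : ℕ, c * ENNReal.ofReal K * a^n := ENNReal.tsum_le_tsum hterm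
      _ = c * ENNReal.ofReal K * ∑' n : ℕ, a^n := ENNReal.tsum_mul_left
      _ = c * ENNReal.ofReal K * (1 - a)⁻¹ := by rw [ENNReal.tsum_geometric]
  have hfin : c * ENNReal.ofReal K * (1 - a)⁻¹ < ⊤ := by
    apply ENNReal.mul_lt_top
    · exact ENNReal.mul_lt_top ENNReal.ofReal_lt_top ENNReal.ofReal_lt_top
    · rw [ENNReal.inv_lt_top]
      exact tsub_pos_of_lt ha1
  calc ∫⁻ x, ENNReal.ofReal (Real.exp (δ * ‖x‖)) ∂Pr
      ≤ ENNReal.ofReal (Real.exp (δ * (R + r)))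
        + ∑' n : ℕ, Pr {y : EuclideanSpace ℝ (Fin d) | R + ((n:ℝ)+1) * r ≤ ‖y‖}
            * ENNReal.ofReal (Real.exp (δ * (R + ((n:ℝ)+2) * r))) := hint
    _ ≤ ENNReal.ofReal (Real.exp (δ * (R + r))) + c * ENNReal.ofReal K * (1 - a)⁻¹ :=
        add_le_add_right hsum _
    _ < ⊤ := ENNReal.add_lt_top.mpr ⟨ENNReal.ofReal_lt_top, hfin⟩
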